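/- Let X and ε be independent real random variables such that x ↦ P(X > x) is (strictly positive and) regularly varying at infinity with index −α for some α ∈ (0,∞), and such that E[e^{δε}] < ∞ for some δ > 0. Then P(X + ε > x) / P(X > x) → 1 as x → ∞. (Corollary to Breiman's lemma, proved in the paper.) -/

import Mathlib

open MeasureTheory ProbabilityTheory Filter Real

/-- `f` is regularly varying at infinity with index `ρ`. -/
def RegularlyVarying (f : ℝ → ℝ) (ρ : ℝ) : Prop :=
  ∀ c : ℝ, 0 < c → Tendsto (fun x => f (c * x) / f x) atTop (nhds (c ^ ρ))

/-- A positive antitone function whose ratio `T(2x)/T(x)` tends to `2^(-α)` admits a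
polynomial lower bound eventually. -/
lemma rv_poly_lower (T : ℝ → ℝ) (hTpos : ∀ x, 0 < T x) (hTanti : Antitone T)
    (α : ℝ) (hα : 0 < α)
    (h2 : Tendsto (fun x => T (2 * x) / T x) atTop (nhds ((2:ℝ) ^ (-α)))) :
    ∃ C > 0, ∃ x0 : ℝ, 1 ≤ x0 ∧ ∀ x, x0 ≤ x → C * x ^ (-(α + 1)) ≤ T x := by
  set β := α + 1 with hβ
  set r := (2:ℝ) ^ (-β) with hr
  have hr0 : 0 < r := rpow_pos_of_pos two_pos _
  have hrlt : r < (2:ℝ) ^ (-α) :=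
    rpow_lt_rpow_of_exponent_lt one_lt_two (by simp only [hβ]; linarith)
  have hev : ∀ᶠ x in atTop, r < T (2 * x) / T x := h2.eventually (eventually_gt_nhds hrlt)
  obtain ⟨x1, hx1⟩ := eventually_atTop.1 hev
  set x0 := max x1 1 with hx0def
  have hx0_1 : (1:ℝ) ≤ x0 := le_max_right _ _
  have hx0pos : (0:ℝ) < x0 := lt_of_lt_of_le one_pos hx0_1
  have step : ∀ x, x0 ≤ x → r * T x ≤ T (2 * x) := by
    intro x hx
    have h := hx1 x (le_trans (le_max_left _ _) hx)
    have hTx := hTpos x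
    rw [lt_div_iff₀ hTx] at h
    linarith
  have iter : ∀ n : ℕ, r ^ n * T x0 ≤ T (2 ^ n * x0) := by
    intro n
    induction n with
    | zero => simp
    | succ k ih =>
      have h1 : x0 ≤ 2 ^ k * x0 := by
        have hpk : (1:ℝ) ≤ 2 ^ k := one_le_pow₀ (by norm_num)
        nlinarith
      have h2' : r * (r ^ k * T x0) ≤ r * T (2 ^ k * x0) :=
        mul_le_mul_of_nonneg_left ih hr0.le
      have h3 : r * T (2 ^ k * x0) ≤ T (2 * (2 ^ k * x0)) := step _ h1
      calc r ^ (k + 1) * T x0 = r * (r ^ k * T x0) := by ring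
        _ ≤ T (2 * (2 ^ k * x0)) := le_trans h2' h3
        _ = T (2 ^ (k + 1) * x0) := by ring_nf
  have hCpos : 0 < (2 / x0) ^ (-β) * T x0 :=
    mul_pos (rpow_pos_of_pos (by positivity) _) (hTpos x0)
  refine ⟨(2 / x0) ^ (-β) * T x0, hCpos, x0, hx0_1, ?_⟩
  intro x hx
  have hxpos : 0 < x := lt_of_lt_of_le hx0pos hx
  -- find n with x ≤ 2^n x0 and 2^n ≤ 2x/x0
  obtain ⟨m, hm⟩ := pow_unbounded_of_one_lt (x / x0) (one_lt_two (α := ℝ))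
  have hPm : x ≤ 2 ^ m * x0 := by
    rw [div_lt_iff₀ hx0pos] at hm
    linarith
  classical
  have hex : ∃ n : ℕ, x ≤ 2 ^ n * x0 := ⟨m, hPm⟩
  set n := Nat.find hex with hndef
  have hn : x ≤ 2 ^ n * x0 := Nat.find_spec hex
  have hn' : (2:ℝ) ^ n ≤ 2 * x / x0 := by
    rcases Nat.eq_zero_or_pos n with h0 | h0
    · rw [h0]
      rw [pow_zero, le_div_iff₀ hx0pos]
      nlinarith
    · have hk : ¬ x ≤ 2 ^ (n - 1) * x0 := Nat.find_min hex (by omega)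
      rw [not_le] at hk
      have hexp : n - 1 + 1 = n := Nat.succ_pred_eq_of_pos h0
      have : (2:ℝ) ^ n = 2 * 2 ^ (n - 1) := by
        rw [← pow_succ']
        rw [hexp]
      rw [this, le_div_iff₀ hx0pos]
      nlinarith
  have h2npos : (0:ℝ) < 2 ^ n := by positivity
  have key1 : (2 * x / x0) ^ (-β) ≤ ((2:ℝ) ^ n) ^ (-β) :=
    rpow_le_rpow_of_nonpos h2npos hn' (by simp only [hβ]; linarith)
  have key2 : ((2:ℝ) ^ n) ^ (-β) = r ^ n := by
    rw [← rpow_natCast (2:ℝ) n, ← rpow_natCast r n, hr, ← rpow_mul (by norm_num),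
      ← rpow_mul (by norm_num)]
    ring_nf
  have key3 : (2 / x0) ^ (-β) * x ^ (-β) = (2 * x / x0) ^ (-β) := by
    rw [← mul_rpow (by positivity) (by positivity)]
    congr 1
    field_simp
  have hTx0 := hTpos x0
  calc (2 / x0) ^ (-β) * T x0 * x ^ (-β)
      = (2 * x / x0) ^ (-β) * T x0 := by rw [← key3]; ring
    _ ≤ ((2:ℝ) ^ n) ^ (-β) * T x0 := mul_le_mul_of_nonneg_right key1 hTx0.le
    _ = r ^ n * T x0 := by rw [key2]
    _ ≤ T (2 ^ n * x0) := iter n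
    _ ≤ T x := hTanti hn

/-- Abstract version of the corollary to Breiman's lemma. -/
lemma breiman_aux (T N : ℝ → ℝ) (α : ℝ) (hα : 0 < α)
    (hTpos : ∀ x, 0 < T x) (hTanti : Antitone T)
    (hRV : ∀ c : ℝ, 0 < c → Tendsto (fun x => T (c * x) / T x) atTop (nhds (c ^ (-α))))
    (hlo : ∃ p : ℕ → ℝ, (∀ n, 0 ≤ p n) ∧ Tendsto p atTop (nhds 1) ∧
      ∀ (n : ℕ) (x : ℝ), T (x + n) * p n ≤ N x)
    (hup : ∀ c : ℝ, 0 < c → c < 1 → ∃ G : ℝ → ℝ, (∀ x, N x ≤ T (c * x) + G x) ∧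
      Tendsto (fun x => G x / T x) atTop (nhds 0)) :
    Tendsto (fun x => N x / T x) atTop (nhds 1) := by
  obtain ⟨p, hp0, hp1, hpN⟩ := hlo
  rw [tendsto_order]
  constructor
  · -- lower bound
    intro l hl
    set a := max l 0 with ha
    have hla : l ≤ a := le_max_left _ _
    have ha0 : 0 ≤ a := le_max_right _ _
    have ha1 : a < 1 := max_lt hl one_pos
    set m := (a + 1) / 2 with hmdef
    have hm0 : 0 < m := by simp only [hmdef]; linarith
    have hm1 : m < 1 := by simp only [hmdef]; linarith
    have hlm2 : l < m * m := by simp only [hmdef]; nlinarith [sq_nonneg (a - 1)]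
    obtain ⟨n, hn⟩ := (hp1.eventually (eventually_gt_nhds hm1)).exists
    set c := m ^ (-(1 / (2 * α))) with hcdef
    have hc1 : 1 < c := by
      rw [hcdef, one_lt_rpow_iff_of_pos hm0]
      right
      constructor
      · exact hm1
      · rw [neg_lt, neg_zero]; positivity
    have hc0 : (0:ℝ) < c := lt_trans one_pos hc1
    have hcpow : c ^ (-α) = m ^ ((1:ℝ)/2) := by
      rw [hcdef, ← rpow_mul hm0.le]
      congr 1
      field_simp
    have hm12 : m < m ^ ((1:ℝ)/2) := by
      nth_rewrite 1 [← rpow_one m]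
      exact rpow_lt_rpow_of_exponent_gt hm0 hm1 (by norm_num)
    have hkey : l < c ^ (-α) * p n := by
      rw [hcpow]
      nlinarith
    have hlim : Tendsto (fun x => T (c * x) / T x * p n) atTop (nhds (c ^ (-α) * p n)) :=
      (hRV c hc0).mul_const _
    have hev1 := hlim.eventually (eventually_gt_nhds hkey)
    have hev2 : ∀ᶠ x : ℝ in atTop, (n:ℝ) / (c - 1) ≤ x := eventually_ge_atTop _
    filter_upwards [hev1, hev2] with x h1 h2
    have hcx : x + n ≤ c * x := by
      rw [div_le_iff₀ (by linarith)] at h2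
      nlinarith
    have hTc : T (c * x) ≤ T (x + n) := hTanti hcx
    have hchain : T (c * x) * p n ≤ N x :=
      le_trans (mul_le_mul_of_nonneg_right hTc (hp0 n)) (hpN n x)
    have hTx := hTpos x
    calc l < T (c * x) / T x * p n := h1
      _ = T (c * x) * p n / T x := by ring
      _ ≤ N x / T x := by apply div_le_div_of_nonneg_right hchain hTx.le |>.trans_eq rfl
  · -- upper bound
    intro u hu
    set c := u ^ (-(1 / (2 * α))) with hcdef
    have hu0 : (0:ℝ) < u := lt_trans one_pos hu
    have hc0 : (0:ℝ) < c := rpow_pos_of_pos hu0 _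
    have hc1 : c < 1 := by
      apply rpow_lt_one_of_one_lt_of_neg hu
      rw [neg_lt, neg_zero]; positivity
    have hcpow : c ^ (-α) = u ^ ((1:ℝ)/2) := by
      rw [hcdef, ← rpow_mul hu0.le]
      congr 1
      field_simp
    have hvu : u ^ ((1:ℝ)/2) < u := by
      nth_rewrite 2 [← rpow_one u]
      exact rpow_lt_rpow_of_exponent_lt hu (by norm_num)
    obtain ⟨G, hG1, hG2⟩ := hup c hc0 hc1
    have hlim : Tendsto (fun x => T (c * x) / T x + G x / T x) atTop
        (nhds (c ^ (-α) + 0)) := (hRV c hc0).add hG2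
    have hlt : c ^ (-α) + 0 < u := by rw [add_zero, hcpow]; exact hvu
    have hev := hlim.eventually (eventually_lt_nhds hlt)
    filter_upwards [hev] with x h1
    have hTx := hTpos x
    calc N x / T x ≤ (T (c * x) + G x) / T x :=
          div_le_div_of_nonneg_right (hG1 x) hTx.le |>.trans_eq rfl
      _ = T (c * x) / T x + G x / T x := by ring
      _ < u := h1

/-- Corollary to Breiman's lemma: adding independent noise with a finite exponential
moment does not change a regularly varying tail. -/
theorem stmt1
    {Ω : Type*} [MeasurableSpace Ω] (μ : Measure Ω) [IsProbabilityMeasure μ]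
    (X ε : Ω → ℝ) (hX : Measurable X) (hε : Measurable ε)
    (hindep : IndepFun X ε μ)
    (α : ℝ) (hα : 0 < α)
    (hpos : ∀ x : ℝ, 0 < (μ {ω | X ω > x}).toReal)
    (hRV : RegularlyVarying (fun x => (μ {ω | X ω > x}).toReal) (-α))
    (hmgf : ∃ δ : ℝ, 0 < δ ∧ Integrable (fun ω => Real.exp (δ * ε ω)) μ) :
    Tendsto (fun x =>
        (μ {ω | X ω + ε ω > x}).toReal / (μ {ω | X ω > x}).toReal) atTop (nhds 1) := by
  obtain ⟨δ, hδ, hint⟩ := hmgf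
  set T : ℝ → ℝ := fun x => (μ {ω | X ω > x}).toReal with hTdef
  set N : ℝ → ℝ := fun x => (μ {ω | X ω + ε ω > x}).toReal with hNdef
  have hTanti : Antitone T := by
    intro a b hab
    exact ENNReal.toReal_mono (measure_ne_top μ _)
      (measure_mono fun ω h => lt_of_le_of_lt hab h)
  have hRV' : ∀ c : ℝ, 0 < c →
      Tendsto (fun x => T (c * x) / T x) atTop (nhds (c ^ (-α))) := hRV
  apply breiman_aux T N α hα hpos hTanti hRV'
  · -- lower bound input
    refine ⟨fun n => (μ {ω | ε ω > -(n:ℝ)}).toReal, fun n => ENNReal.toReal_nonneg, ?_, ?_⟩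
    · have hmono : Monotone fun n : ℕ => {ω | ε ω > -(n:ℝ)} := by
        intro a b hab ω h
        simp only [Set.mem_setOf_eq] at h ⊢
        have : -(b:ℝ) ≤ -(a:ℝ) := neg_le_neg (Nat.cast_le.2 hab)
        exact lt_of_le_of_lt this h
      have hunion : (⋃ n : ℕ, {ω | ε ω > -(n:ℝ)}) = Set.univ := by
        rw [Set.eq_univ_iff_forall]
        intro ω
        obtain ⟨n, hn⟩ := exists_nat_gt (-(ε ω))
        exact Set.mem_iUnion.2 ⟨n, by simp only [Set.mem_setOf_eq]; linarith⟩
      have h1 : Tendsto (fun n : ℕ => μ {ω | ε ω > -(n:ℝ)}) atTop (nhds 1) := by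
        have := tendsto_measure_iUnion_atTop (μ := μ) hmono
        rwa [hunion, measure_univ] at this
      have := (ENNReal.tendsto_toReal ENNReal.one_ne_top).comp h1
      simpa [Function.comp_def] using this
    · intro n x
      have hsub : {ω | X ω > x + n} ∩ {ω | ε ω > -(n:ℝ)} ⊆ {ω | X ω + ε ω > x} := by
        intro ω ⟨h1, h2⟩
        simp only [Set.mem_setOf_eq] at h1 h2 ⊢
        linarith
      have hμ : μ ({ω | X ω > x + n} ∩ {ω | ε ω > -(n:ℝ)})
          = μ {ω | X ω > x + n} * μ {ω | ε ω > -(n:ℝ)} :=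
        hindep.measure_inter_preimage_eq_mul (Set.Ioi (x + n)) (Set.Ioi (-(n:ℝ)))
          measurableSet_Ioi measurableSet_Ioi
      have hle : μ {ω | X ω > x + n} * μ {ω | ε ω > -(n:ℝ)} ≤ μ {ω | X ω + ε ω > x} := by
        rw [← hμ]; exact measure_mono hsub
      have := ENNReal.toReal_mono (measure_ne_top μ _) hle
      rw [ENNReal.toReal_mul] at this
      exact this
  · -- upper bound input
    intro c hc0 hc1
    set η := 1 - c with hηdef
    have hη : 0 < η := by simp only [hηdef]; linarith
    set M := mgf ε μ δ with hMdef
    refine ⟨fun x => Real.exp (-(δ * η) * x) * M, ?_, ?_⟩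
    · intro x
      have hsub : {ω | X ω + ε ω > x} ⊆ {ω | X ω > c * x} ∪ {ω | ε ω > η * x} := by
        intro ω hω
        simp only [Set.mem_setOf_eq] at hω
        by_cases hεω : η * x < ε ω
        · exact Or.inr hεω
        · left
          simp only [Set.mem_setOf_eq]
          push_neg at hεω
          rw [hηdef, sub_mul, one_mul] at hεω
          linarith
      have h1 : μ {ω | X ω + ε ω > x} ≤ μ {ω | X ω > c * x} + μ {ω | ε ω > η * x} :=
        (measure_mono hsub).trans (measure_union_le _ _)
      have h2 : N x ≤ T (c * x) + (μ {ω | ε ω > η * x}).toReal := by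
        have := ENNReal.toReal_mono
          (ENNReal.add_ne_top.2 ⟨measure_ne_top μ _, measure_ne_top μ _⟩) h1
        rwa [ENNReal.toReal_add (measure_ne_top μ _) (measure_ne_top μ _)] at this
      refine h2.trans (add_le_add (le_refl _) ?_)
      -- Chernoff bound
      have hch := measure_ge_le_exp_mul_mgf (X := ε) (μ := μ) (t := δ) (η * x) hδ.le hint
      have hsub2 : {ω | ε ω > η * x} ⊆ {ω | η * x ≤ ε ω} := by
        intro ω h
        simp only [Set.mem_setOf_eq] at h ⊢
        exact le_of_lt h
      have h3 : (μ {ω | ε ω > η * x}).toReal ≤ (μ {ω | η * x ≤ ε ω}).toReal :=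
        ENNReal.toReal_mono (measure_ne_top μ _) (measure_mono hsub2)
      refine h3.trans (hch.trans_eq ?_)
      rw [hMdef]
      ring_nf
    · -- G / T → 0
      have h2' := hRV' 2 two_pos
      obtain ⟨C, hC, x0, hx0, hlow⟩ := rv_poly_lower T hpos hTanti α hα h2'
      have hM0 : 0 ≤ M := mgf_nonneg
      apply squeeze_zero' (g := fun x => (M / C) * (x ^ (α + 1) * Real.exp (-(δ * η) * x)))
      · exact Eventually.of_forall fun x =>
          div_nonneg (mul_nonneg (Real.exp_pos _).le hM0) (hpos x).le
      · filter_upwards [eventually_ge_atTop x0] with x hx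
        have hxpos : 0 < x := lt_of_lt_of_le (lt_of_lt_of_le one_pos hx0) hx
        have hTlow : C * x ^ (-(α + 1)) ≤ T x := hlow x hx
        have hd0 : 0 < C * x ^ (-(α + 1)) := by positivity
        have hdiv : Real.exp (-(δ * η) * x) * M / T x
            ≤ Real.exp (-(δ * η) * x) * M / (C * x ^ (-(α + 1))) :=
          div_le_div_of_nonneg_left (mul_nonneg (Real.exp_pos _).le hM0) hd0 hTlow
        refine hdiv.trans_eq ?_
        rw [Real.rpow_neg hxpos.le]
        have hxa : (0:ℝ) < x ^ (α + 1) := rpow_pos_of_pos hxpos _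
        field_simp
      · have := (tendsto_rpow_mul_exp_neg_mul_atTop_nhds_zero (α + 1) (δ * η)
          (by positivity)).const_mul (M / C)
        simpa using this
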